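/- Let ρ and σ be density matrices on Fin n and let Λ be a test. Then √F(ρ,σ) ≤ √( Re Tr[Λ·ρ] · Re Tr[Λ·σ] ) + √( Re Tr[(1−Λ)·ρ] · Re Tr[(1−Λ)·σ] ). (The root fidelity is bounded above by the classical root fidelity of the outcome distributions of any binary measurement {Λ, 1−Λ}.) -/

import Mathlib

open Matrix Kronecker
open scoped ComplexOrder

open scoped Classical in
noncomputable def matSqrt {n : Type*} [Fintype n] [DecidableEq n] (A : Matrix n n ℂ) :
    Matrix n n ℂ :=
  if h : A.PosSemidef then
    (h.1.eigenvectorUnitary : Matrix n n ℂ) *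
      Matrix.diagonal ((↑) ∘ (Real.sqrt ·) ∘ h.1.eigenvalues) *
      (star h.1.eigenvectorUnitary : Matrix n n ℂ)
  else 0

noncomputable def rootFidelity {n : Type*} [Fintype n] [DecidableEq n]
    (ρ σ : Matrix n n ℂ) : ℝ :=
  (matSqrt (matSqrt σ * ρ * matSqrt σ)).trace.re

noncomputable def fidelity {n : Type*} [Fintype n] [DecidableEq n]
    (ρ σ : Matrix n n ℂ) : ℝ :=
  (rootFidelity ρ σ) ^ 2

noncomputable def traceNorm {n : Type*} [Fintype n] [DecidableEq n] (A : Matrix n n ℂ) : ℝ :=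
  (matSqrt (Aᴴ * A)).trace.re

/-- The set of attainable type-II error values in hypothesis testing. -/
def testValues {n : Type*} [Fintype n] [DecidableEq n] (ρ σ : Matrix n n ℂ) (ε : ℝ) :
    Set ℝ :=
  { x | ∃ Λ : Matrix n n ℂ, Λ.PosSemidef ∧ (1 - Λ).PosSemidef ∧
      1 - ε ≤ (Λ * ρ).trace.re ∧ x = (Λ * σ).trace.re }

/-- ε-hypothesis-testing relative entropy. -/
noncomputable def Dh {n : Type*} [Fintype n] [DecidableEq n]
    (ρ σ : Matrix n n ℂ) (ε : ℝ) : ℝ :=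
  - Real.logb 2 (sInf (testValues ρ σ ε))

/-- GHZ unit vector. -/
noncomputable def ghz (M K : ℕ) : (Fin M → Fin K) → ℂ :=
  fun f => if ∃ c, ∀ m, f m = c then ((Real.sqrt K : ℂ))⁻¹ else 0

/-- GHZ rank-one projection. -/
noncomputable def ghzProj (M K : ℕ) : Matrix (Fin M → Fin K) (Fin M → Fin K) ℂ :=
  Matrix.vecMulVec (ghz M K) (star ∘ ghz M K)

/-- The twisting unitary. -/
def twist (M K d : ℕ)
    (U : (Fin M → Fin K) → Matrix (Fin M → Fin d) (Fin M → Fin d) ℂ) :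
    Matrix ((Fin M → Fin K) × (Fin M → Fin d)) ((Fin M → Fin K) × (Fin M → Fin d)) ℂ :=
  Matrix.of fun p q => if p.1 = q.1 then U p.1 p.2 q.2 else 0

/-- The privacy test `Π = W (Φ ⊗ 1) Wᴴ`. -/
noncomputable def privacyTest (M K d : ℕ)
    (U : (Fin M → Fin K) → Matrix (Fin M → Fin d) (Fin M → Fin d) ℂ) :
    Matrix ((Fin M → Fin K) × (Fin M → Fin d)) ((Fin M → Fin K) × (Fin M → Fin d)) ℂ :=
  twist M K d U * (ghzProj M K ⊗ₖ (1 : Matrix (Fin M → Fin d) (Fin M → Fin d) ℂ)) *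
    (twist M K d U)ᴴ

/-- The private state `γ = W (Φ ⊗ ω) Wᴴ`. -/
noncomputable def privateState (M K d : ℕ)
    (U : (Fin M → Fin K) → Matrix (Fin M → Fin d) (Fin M → Fin d) ℂ)
    (ω : Matrix (Fin M → Fin d) (Fin M → Fin d) ℂ) :
    Matrix ((Fin M → Fin K) × (Fin M → Fin d)) ((Fin M → Fin K) × (Fin M → Fin d)) ℂ :=
  twist M K d U * (ghzProj M K ⊗ₖ ω) * (twist M K d U)ᴴ

/-- A vector on `𝒦 × 𝒮` is product across the bipartition `J | Jᶜ` of the parties. -/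
def IsProductAcross {M K d : ℕ} (J : Set (Fin M))
    (v : (Fin M → Fin K) × (Fin M → Fin d) → ℂ) : Prop :=
  ∃ (v₁ : ((↥J) → Fin K) × ((↥J) → Fin d) → ℂ)
    (v₂ : ((↥(Jᶜ)) → Fin K) × ((↥(Jᶜ)) → Fin d) → ℂ),
    ∀ (f : Fin M → Fin K) (x : Fin M → Fin d),
      v (f, x) = v₁ (fun m => f m.1, fun m => x m.1) * v₂ (fun m => f m.1, fun m => x m.1)

/-- Biseparability: a finite convex combination of pure states, each product across
some nontrivial bipartition of the parties. -/
def Biseparable {M K d : ℕ}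
    (σ : Matrix ((Fin M → Fin K) × (Fin M → Fin d))
      ((Fin M → Fin K) × (Fin M → Fin d)) ℂ) : Prop :=
  ∃ (N : ℕ) (p : Fin N → ℝ) (w : Fin N → ((Fin M → Fin K) × (Fin M → Fin d)) → ℂ)
    (J : Fin N → Set (Fin M)),
    (∀ t, 0 ≤ p t) ∧ (∑ t, p t = 1) ∧
    (∀ t, ∑ i, ‖w t i‖ ^ 2 = 1) ∧
    (∀ t, J t ≠ ∅ ∧ J t ≠ Set.univ ∧ IsProductAcross (J t) (w t)) ∧
    σ = ∑ t, (p t : ℂ) • Matrix.vecMulVec (w t) (star ∘ w t)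

/-- Partial trace over the second tensor factor. -/
noncomputable def partialTrace₂ {A B : Type*} [Fintype B] (τ : Matrix (A × B) (A × B) ℂ) :
    Matrix A A ℂ :=
  Matrix.of fun a a' => ∑ b, τ (a, b) (a', b)

/-- Matrix logarithm of a Hermitian matrix via the spectral functional calculus. -/
noncomputable def matLog {n : Type*} [Fintype n] [DecidableEq n] (A : Matrix n n ℂ) :
    Matrix n n ℂ :=
  if hA : A.IsHermitian then
    (hA.eigenvectorUnitary : Matrix n n ℂ) *
      Matrix.diagonal (fun i => (Real.log (hA.eigenvalues i) : ℂ)) *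
      (star hA.eigenvectorUnitary : Matrix n n ℂ)
  else 0

noncomputable def Matrix.PosSemidef.sqrt {n : Type*} [Fintype n] [DecidableEq n]
    {A : Matrix n n ℂ} (_hA : A.PosSemidef) : Matrix n n ℂ :=
  matSqrt A

lemma Matrix.PosSemidef.sqrt_eq {n : Type*} [Fintype n] [DecidableEq n]
    {A : Matrix n n ℂ} (hA : A.PosSemidef) :
    hA.sqrt = (hA.1.eigenvectorUnitary : Matrix n n ℂ) *
      Matrix.diagonal ((↑) ∘ (Real.sqrt ·) ∘ hA.1.eigenvalues) *
      (star hA.1.eigenvectorUnitary : Matrix n n ℂ) := by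
  unfold Matrix.PosSemidef.sqrt matSqrt
  rw [dif_pos hA]

lemma Matrix.PosSemidef.posSemidef_sqrt {n : Type*} [Fintype n] [DecidableEq n]
    {A : Matrix n n ℂ} (hA : A.PosSemidef) : hA.sqrt.PosSemidef := by
  rw [hA.sqrt_eq]
  have h := (Matrix.PosSemidef.diagonal
    (fun i => Complex.zero_le_real.mpr (Real.sqrt_nonneg (hA.1.eigenvalues i)) :
      (0 : n → ℂ) ≤ ((↑) ∘ (Real.sqrt ·) ∘ hA.1.eigenvalues))).mul_mul_conjTranspose_same
      (hA.1.eigenvectorUnitary : Matrix n n ℂ)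
  rwa [← Matrix.star_eq_conjTranspose] at h

lemma Matrix.PosSemidef.sqrt_mul_self {n : Type*} [Fintype n] [DecidableEq n]
    {A : Matrix n n ℂ} (hA : A.PosSemidef) : hA.sqrt * hA.sqrt = A := by
  have huu : star (hA.1.eigenvectorUnitary : Matrix n n ℂ) * hA.1.eigenvectorUnitary = 1 :=
    Matrix.mem_unitaryGroup_iff'.mp hA.1.eigenvectorUnitary.2
  rw [hA.sqrt_eq]
  simp only [Matrix.mul_assoc]
  rw [← Matrix.mul_assoc (star _) _, huu, Matrix.one_mul,
    ← Matrix.mul_assoc (Matrix.diagonal _), Matrix.diagonal_mul_diagonal]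
  have hfun : (fun i => (((↑) ∘ (Real.sqrt ·) ∘ hA.1.eigenvalues) i : ℂ) *
      (((↑) ∘ (Real.sqrt ·) ∘ hA.1.eigenvalues) i : ℂ))
      = fun i => ((hA.1.eigenvalues i : ℝ) : ℂ) := by
    funext i
    simp only [Function.comp_apply]
    rw [← Complex.ofReal_mul, Real.mul_self_sqrt (hA.eigenvalues_nonneg i)]
  rw [hfun]
  conv_rhs => rw [hA.1.spectral_theorem]
  simp [Unitary.conjStarAlgAut_apply, Matrix.mul_assoc]
  rfl





namespace Stmt6Aux

variable {n : ℕ}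

lemma trace_re_nonneg {M : Matrix (Fin n) (Fin n) ℂ} (hM : M.PosSemidef) :
    0 ≤ M.trace.re := by
  have h : ∀ i, 0 ≤ (M i i).re := by
    intro i
    have h0 : 0 ≤ M i i := hM.diag_nonneg
    simpa using (Complex.le_def.mp h0).1
  rw [Matrix.trace]
  rw [Complex.re_sum]
  exact Finset.sum_nonneg fun i _ => h i

lemma trace_key (Z W : Matrix (Fin n) (Fin n) ℂ) :
    ((Zᴴ * W).trace).re
      = ∑ p : Fin n × Fin n, ((starRingEnd ℂ) (Z p.2 p.1) * W p.2 p.1).re := by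
  rw [Matrix.trace, Complex.re_sum]
  have : ∀ i : Fin n, ((Zᴴ * W).diag i).re
      = ∑ j : Fin n, ((starRingEnd ℂ) (Z j i) * W j i).re := by
    intro i
    rw [Matrix.diag_apply, Matrix.mul_apply, Complex.re_sum]
    simp only [Matrix.conjTranspose_apply, Complex.star_def]
  rw [Finset.sum_congr rfl (fun i _ => this i), ← Fintype.sum_prod_type']

lemma cs (X Y : Matrix (Fin n) (Fin n) ℂ) :
    ((Xᴴ * Y).trace).re
      ≤ Real.sqrt ((Xᴴ * X).trace.re) * Real.sqrt ((Yᴴ * Y).trace.re) := by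
  have hsq : ∀ (Z : Matrix (Fin n) (Fin n) ℂ),
      ((Zᴴ * Z).trace).re = ∑ p : Fin n × Fin n, ‖Z p.2 p.1‖ ^ 2 := by
    intro Z
    rw [trace_key]
    congr 1; ext p
    rw [mul_comm, Complex.mul_conj]
    rw [Complex.ofReal_re, Complex.normSq_eq_norm_sq]
  calc ((Xᴴ * Y).trace).re
      = ∑ p : Fin n × Fin n, ((starRingEnd ℂ) (X p.2 p.1) * Y p.2 p.1).re := trace_key X Y
    _ ≤ ∑ p : Fin n × Fin n, ‖X p.2 p.1‖ * ‖Y p.2 p.1‖ := by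
        refine Finset.sum_le_sum fun p _ => ?_
        refine (Complex.re_le_norm _).trans ?_
        rw [norm_mul, Complex.norm_conj]
    _ ≤ Real.sqrt (∑ p : Fin n × Fin n, ‖X p.2 p.1‖ ^ 2) *
        Real.sqrt (∑ p : Fin n × Fin n, ‖Y p.2 p.1‖ ^ 2) :=
        Real.sum_mul_le_sqrt_mul_sqrt _ _ _
    _ = _ := by rw [hsq X, hsq Y]

lemma trace_mul_le {M Q : Matrix (Fin n) (Fin n) ℂ} (hM : M.PosSemidef)
    (hQ : (1 - Q).PosSemidef) : ((M * Q).trace).re ≤ M.trace.re := by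
  have hs := hM.posSemidef_sqrt
  have hpsd : (hM.sqrt * (1 - Q) * hM.sqrt).PosSemidef := by
    have h := hQ.mul_mul_conjTranspose_same hM.sqrt
    rwa [hs.1] at h
  have htr : (M * (1 - Q)).trace = (hM.sqrt * (1 - Q) * hM.sqrt).trace := by
    rw [Matrix.trace_mul_cycle hM.sqrt (1 - Q) hM.sqrt, hM.sqrt_mul_self]
  have h0 := trace_re_nonneg hpsd
  rw [← htr, Matrix.mul_sub, Matrix.mul_one, Matrix.trace_sub, Complex.sub_re] at h0
  linarith

lemma trace_mul_re_nonneg {A B : Matrix (Fin n) (Fin n) ℂ} (hA : A.PosSemidef)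
    (hB : B.PosSemidef) : 0 ≤ ((A * B).trace).re := by
  have hs := hB.posSemidef_sqrt
  have hpsd : (hB.sqrt * A * hB.sqrt).PosSemidef := by
    have h := hA.mul_mul_conjTranspose_same hB.sqrt
    rwa [hs.1] at h
  have htr : (A * B).trace = (hB.sqrt * A * hB.sqrt).trace := by
    conv_lhs => rw [← hB.sqrt_mul_self, ← Matrix.mul_assoc]
    rw [Matrix.trace_mul_cycle]
  rw [htr]
  exact trace_re_nonneg hpsd

lemma term_bound {ρ σ Λ : Matrix (Fin n) (Fin n) ℂ} (hρ : ρ.PosSemidef)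
    (hσ : σ.PosSemidef) (hΛ : Λ.PosSemidef) (W : Matrix (Fin n) (Fin n) ℂ)
    (h1Q : (1 - W * Wᴴ).PosSemidef) :
    ((Wᴴ * (hρ.sqrt * Λ * hσ.sqrt)).trace).re
      ≤ Real.sqrt ((Λ * ρ).trace.re) * Real.sqrt ((Λ * σ).trace.re) := by
  have hsρ := hρ.posSemidef_sqrt
  have hsσ := hσ.posSemidef_sqrt
  have hsΛ := hΛ.posSemidef_sqrt
  set sρ := hρ.sqrt
  set sσ := hσ.sqrt
  set sΛ := hΛ.sqrt
  have hρs : sρ * sρ = ρ := hρ.sqrt_mul_self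
  have hσs : sσ * sσ = σ := hσ.sqrt_mul_self
  have hΛs : sΛ * sΛ = Λ := hΛ.sqrt_mul_self
  set X := sΛ * (sρ * W) with hXdef
  set Y := sΛ * sσ with hYdef
  have hXh : Xᴴ = Wᴴ * sρ * sΛ := by
    rw [hXdef, Matrix.conjTranspose_mul, Matrix.conjTranspose_mul, hsΛ.1, hsρ.1,
      Matrix.mul_assoc]
  have hXY : Xᴴ * Y = Wᴴ * (sρ * Λ * sσ) := by
    rw [hXh, hYdef]
    simp only [Matrix.mul_assoc]
    rw [← Matrix.mul_assoc sΛ sΛ, hΛs]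
  have hM : (sρ * Λ * sρ).PosSemidef := by
    have h := hΛ.mul_mul_conjTranspose_same sρ
    rwa [hsρ.1] at h
  have hXX : ((Xᴴ * X).trace).re ≤ ((Λ * ρ).trace).re := by
    have e1 : Xᴴ * X = Wᴴ * ((sρ * Λ * sρ) * W) := by
      rw [hXh, hXdef]
      simp only [Matrix.mul_assoc]
      rw [← Matrix.mul_assoc sΛ sΛ, hΛs]
    have e2 : (Xᴴ * X).trace = ((sρ * Λ * sρ) * (W * Wᴴ)).trace := by
      rw [e1, Matrix.trace_mul_comm, Matrix.mul_assoc]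
    have e3 : ((sρ * Λ * sρ)).trace = ((Λ * ρ)).trace := by
      rw [Matrix.trace_mul_cycle sρ Λ sρ, hρs, Matrix.trace_mul_comm]
    rw [e2, ← e3]
    exact trace_mul_le hM h1Q
  have hYY : (Yᴴ * Y).trace = (Λ * σ).trace := by
    rw [hYdef, Matrix.conjTranspose_mul, hsΛ.1, hsσ.1]
    calc (sσ * sΛ * (sΛ * sσ)).trace = (sσ * (Λ * sσ)).trace := by
          rw [Matrix.mul_assoc, ← Matrix.mul_assoc sΛ sΛ, hΛs]
      _ = (Λ * σ).trace := by
          rw [Matrix.trace_mul_comm, Matrix.mul_assoc, hσs]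
  calc ((Wᴴ * (sρ * Λ * sσ)).trace).re = ((Xᴴ * Y).trace).re := by rw [hXY]
    _ ≤ Real.sqrt ((Xᴴ * X).trace.re) * Real.sqrt ((Yᴴ * Y).trace.re) := cs X Y
    _ ≤ Real.sqrt ((Λ * ρ).trace.re) * Real.sqrt ((Λ * σ).trace.re) := by
        have hy : (Yᴴ * Y).trace.re = (Λ * σ).trace.re := by rw [hYY]
        exact mul_le_mul (Real.sqrt_le_sqrt hXX) (Real.sqrt_le_sqrt (le_of_eq hy))
          (Real.sqrt_nonneg _) (Real.sqrt_nonneg _)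

end Stmt6Aux


theorem stmt_6 (n : ℕ) (ρ σ : Matrix (Fin n) (Fin n) ℂ)
    (hρ : ρ.PosSemidef) (hρtr : ρ.trace = 1)
    (hσ : σ.PosSemidef) (hσtr : σ.trace = 1)
    (Λ : Matrix (Fin n) (Fin n) ℂ) (hΛ : Λ.PosSemidef) (hΛ' : (1 - Λ).PosSemidef) :
    rootFidelity ρ σ ≤
      Real.sqrt ((Λ * ρ).trace.re * (Λ * σ).trace.re) +
        Real.sqrt (((1 - Λ) * ρ).trace.re * ((1 - Λ) * σ).trace.re) := by
  classical
  have hsρ := hρ.posSemidef_sqrt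
  have hsσ := hσ.posSemidef_sqrt
  have hρs : hρ.sqrt * hρ.sqrt = ρ := hρ.sqrt_mul_self
  have hB : (hσ.sqrt * ρ * hσ.sqrt).PosSemidef := by
    have h := hρ.mul_mul_conjTranspose_same hσ.sqrt
    rwa [hsσ.1] at h
  set u : Matrix (Fin n) (Fin n) ℂ := (hB.1.eigenvectorUnitary : Matrix (Fin n) (Fin n) ℂ) with hudef
  have huu : star u * u = 1 := Matrix.mem_unitaryGroup_iff'.mp hB.1.eigenvectorUnitary.2
  set g : Fin n → ℝ := fun i => Real.sqrt (hB.1.eigenvalues i) with hgdef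
  have mul3 : ∀ d e : Fin n → ℂ,
      (u * Matrix.diagonal d * star u) * (u * Matrix.diagonal e * star u)
        = u * Matrix.diagonal (fun i => d i * e i) * star u := by
    intro d e
    simp only [Matrix.mul_assoc]
    rw [← Matrix.mul_assoc (star u) u, huu, Matrix.one_mul,
      ← Matrix.mul_assoc (Matrix.diagonal d), Matrix.diagonal_mul_diagonal]
  have herm3 : ∀ d : Fin n → ℂ, (∀ i, star (d i) = d i) →
      (u * Matrix.diagonal d * star u)ᴴ = u * Matrix.diagonal d * star u := by
    intro d hd
    have hsd : star d = d := funext hd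
    rw [Matrix.conjTranspose_mul, Matrix.conjTranspose_mul, Matrix.diagonal_conjTranspose,
      hsd, ← Matrix.star_eq_conjTranspose u, ← Matrix.star_eq_conjTranspose (star u),
      star_star, Matrix.mul_assoc]
  set C := u * Matrix.diagonal (fun i => (g i : ℂ)) * star u with hCdef
  set D := u * Matrix.diagonal (fun i => ((g i : ℂ))⁻¹) * star u with hDdef
  set P := u * Matrix.diagonal (fun i => if g i = 0 then (0 : ℂ) else 1) * star u with hPdef
  have hCsq : C * C = hσ.sqrt * ρ * hσ.sqrt := by
    rw [hCdef, mul3]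
    have hfun : (fun i => (g i : ℂ) * (g i : ℂ))
        = fun i => ((hB.1.eigenvalues i : ℝ) : ℂ) := by
      funext i
      rw [← Complex.ofReal_mul, Real.mul_self_sqrt (hB.eigenvalues_nonneg i)]
    rw [hfun]
    conv_rhs => rw [hB.1.spectral_theorem]
    simp [Unitary.conjStarAlgAut_apply, Matrix.mul_assoc, hudef, Function.comp_def]
  have hCpsd : C.PosSemidef := by
    have h := (Matrix.PosSemidef.diagonal
      (fun i => Complex.zero_le_real.mpr (Real.sqrt_nonneg (hB.1.eigenvalues i)) :
        (0 : Fin n → ℂ) ≤ fun i => ((g i : ℝ) : ℂ))).mul_mul_conjTranspose_same u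
    rwa [← Matrix.star_eq_conjTranspose] at h
  have hCeq : C = hB.sqrt := by rw [Matrix.PosSemidef.sqrt_eq]; rfl
  have hRF : rootFidelity ρ σ = C.trace.re := by
    have h3 : matSqrt σ = hσ.sqrt := rfl
    have h4 : matSqrt (hσ.sqrt * ρ * hσ.sqrt) = hB.sqrt := rfl
    simp only [rootFidelity]
    rw [h3, h4, hCeq]
  have hDC : D * C = P := by
    rw [hDdef, hCdef, hPdef, mul3]
    have : (fun i => ((g i : ℂ))⁻¹ * (g i : ℂ))
        = fun i => if g i = 0 then (0 : ℂ) else 1 := by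
      funext i
      by_cases h : g i = 0
      · simp [h]
      · rw [if_neg h, inv_mul_cancel₀ (Complex.ofReal_ne_zero.mpr h)]
    rw [this]
  have hCD : C * D = P := by
    rw [hDdef, hCdef, hPdef, mul3]
    have : (fun i => (g i : ℂ) * ((g i : ℂ))⁻¹)
        = fun i => if g i = 0 then (0 : ℂ) else 1 := by
      funext i
      by_cases h : g i = 0
      · simp [h]
      · rw [if_neg h, mul_inv_cancel₀ (Complex.ofReal_ne_zero.mpr h)]
    rw [this]
  have hPC : P * C = C := by
    rw [hCdef, hPdef, mul3]
    have : (fun i => (if g i = 0 then (0 : ℂ) else 1) * (g i : ℂ))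
        = fun i => (g i : ℂ) := by
      funext i
      by_cases h : g i = 0 <;> simp [h]
    rw [this]
  have hCP : C * P = C := by
    rw [hCdef, hPdef, mul3]
    have : (fun i => (g i : ℂ) * (if g i = 0 then (0 : ℂ) else 1))
        = fun i => (g i : ℂ) := by
      funext i
      by_cases h : g i = 0 <;> simp [h]
    rw [this]
  have hDP : D * P = D := by
    rw [hDdef, hPdef, mul3]
    have : (fun i => ((g i : ℂ))⁻¹ * (if g i = 0 then (0 : ℂ) else 1))
        = fun i => ((g i : ℂ))⁻¹ := by
      funext i
      by_cases h : g i = 0 <;> simp [h]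
    rw [this]
  have hDherm : Dᴴ = D := by
    refine herm3 _ fun i => ?_
    rw [star_inv₀, Complex.star_def, Complex.conj_ofReal]
  set AA := hρ.sqrt * hσ.sqrt with hAdef
  have hAtA : AAᴴ * AA = hσ.sqrt * ρ * hσ.sqrt := by
    rw [hAdef, Matrix.conjTranspose_mul, hsσ.1, hsρ.1]
    simp only [Matrix.mul_assoc]
    rw [← Matrix.mul_assoc hρ.sqrt hρ.sqrt, hρs]
  set W := AA * D with hWdef
  have hWh : Wᴴ = D * AAᴴ := by rw [hWdef, Matrix.conjTranspose_mul, hDherm]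
  have hWA : Wᴴ * AA = C := by
    rw [hWh, Matrix.mul_assoc, hAtA, ← hCsq, ← Matrix.mul_assoc, hDC, hPC]
  have hWW : Wᴴ * W = P := by
    rw [hWh, hWdef, Matrix.mul_assoc, ← Matrix.mul_assoc AAᴴ AA D, hAtA, ← hCsq,
      Matrix.mul_assoc C C D, hCD, hCP, hDC]
  have hWP : W * P = W := by rw [hWdef, Matrix.mul_assoc, hDP]
  have hQQ : (W * Wᴴ) * (W * Wᴴ) = W * Wᴴ := by
    rw [Matrix.mul_assoc W Wᴴ (W * Wᴴ), ← Matrix.mul_assoc Wᴴ W Wᴴ, hWW,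
      ← Matrix.mul_assoc W P Wᴴ, hWP]
  have hQherm : (W * Wᴴ)ᴴ = W * Wᴴ := by
    rw [Matrix.conjTranspose_mul, Matrix.conjTranspose_conjTranspose]
  have h1Q : (1 - W * Wᴴ).PosSemidef := by
    have key : (1 - W * Wᴴ)ᴴ * (1 - W * Wᴴ) = 1 - W * Wᴴ := by
      rw [Matrix.conjTranspose_sub, Matrix.conjTranspose_one, hQherm, Matrix.sub_mul,
        Matrix.mul_sub, Matrix.mul_sub, Matrix.one_mul, Matrix.mul_one, hQQ]
      simp only [one_mul, mul_one]
      abel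
    have h := Matrix.posSemidef_conjTranspose_mul_self (1 - W * Wᴴ)
    rwa [key] at h
  have hsplit : hρ.sqrt * Λ * hσ.sqrt + hρ.sqrt * (1 - Λ) * hσ.sqrt = AA := by
    rw [hAdef]
    noncomm_ring
  have hTr : C.trace.re = ((Wᴴ * (hρ.sqrt * Λ * hσ.sqrt)).trace).re
      + ((Wᴴ * (hρ.sqrt * (1 - Λ) * hσ.sqrt)).trace).re := by
    rw [← hWA, ← hsplit, Matrix.mul_add, Matrix.trace_add, Complex.add_re]
  have hn1 : 0 ≤ ((Λ * ρ).trace).re := Stmt6Aux.trace_mul_re_nonneg hΛ hρ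
  have hn2 : 0 ≤ (((1 - Λ) * ρ).trace).re := Stmt6Aux.trace_mul_re_nonneg hΛ' hρ
  rw [hRF, hTr, Real.sqrt_mul hn1, Real.sqrt_mul hn2]
  exact add_le_add (Stmt6Aux.term_bound hρ hσ hΛ W h1Q)
    (Stmt6Aux.term_bound hρ hσ hΛ' W h1Q)
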